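/- Let P be a finite p-group with a central series 1 = P₀ ≤ P₁ ≤ ⋯ ≤ P_k = P of length k < p, such that each P_i is generated by elements of order dividing p. Then every element of P has order dividing p (i.e., P has exponent p). -/

import Mathlib

open Subgroup
open scoped commutatorElement

section ThreeSub
variable {G : Type*} [Group G]


theorem lcs_succ' (m : ℕ) :
    (⊤ : Subgroup G).lowerCentralSeries (m+1) = ⁅(⊤ : Subgroup G).lowerCentralSeries m, ⊤⁆ := rfl

theorem hallwitt_mem {N H₁ H₂ H₃ : Subgroup G} [hN : N.Normal]
    (h1 : ⁅⁅H₂, H₃⁆, H₁⁆ ≤ N) (h2 : ⁅⁅H₃, H₁⁆, H₂⁆ ≤ N)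
    {x y z : G} (hx : x ∈ H₁) (hy : y ∈ H₂) (hz : z ∈ H₃) :
    ⁅⁅x, y⁆, z⁆ ∈ N := by
  have hQ : ⁅y, ⁅z⁻¹, x⁻¹⁆⁆ ∈ N := by
    have h : ⁅⁅z⁻¹, x⁻¹⁆, y⁆ ∈ N := h2 (commutator_mem_commutator
      (commutator_mem_commutator (H₃.inv_mem hz) (H₁.inv_mem hx)) hy)
    have h' := N.inv_mem h
    rwa [commutatorElement_inv] at h'
  have hR : ⁅x⁻¹, ⁅y⁻¹, z⁆⁆ ∈ N := by
    have h : ⁅⁅y⁻¹, z⁆, x⁻¹⁆ ∈ N := h1 (commutator_mem_commutator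
      (commutator_mem_commutator (H₂.inv_mem hy) hz) (H₁.inv_mem hx))
    have h' := N.inv_mem h
    rwa [commutatorElement_inv] at h'
  have key : ⁅z, ⁅x, y⁆⁆ =
      (x * (z * ⁅y, ⁅z⁻¹, x⁻¹⁆⁆⁻¹ * z⁻¹) * x⁻¹) * (x * (y * ⁅x⁻¹, ⁅y⁻¹, z⁆⁆⁻¹ * y⁻¹) * x⁻¹) := by
    group
  have hmem : ⁅z, ⁅x, y⁆⁆ ∈ N := by
    rw [key]
    exact N.mul_mem
      (hN.conj_mem _ (hN.conj_mem _ (N.inv_mem hQ) _) _)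
      (hN.conj_mem _ (hN.conj_mem _ (N.inv_mem hR) _) _)
  have h' := N.inv_mem hmem
  rwa [commutatorElement_inv] at h'

theorem three_subgroups {N H₁ H₂ H₃ : Subgroup G} [N.Normal]
    (h1 : ⁅⁅H₂, H₃⁆, H₁⁆ ≤ N) (h2 : ⁅⁅H₃, H₁⁆, H₂⁆ ≤ N) :
    ⁅⁅H₁, H₂⁆, H₃⁆ ≤ N := by
  rw [commutator_le]
  intro c hc z hz
  induction hc using closure_induction with
  | mem g hg =>
      obtain ⟨g₁, hg₁, g₂, hg₂, rfl⟩ := hg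
      exact hallwitt_mem h1 h2 hg₁ hg₂ hz
  | one => simpa using N.one_mem
  | mul a b _ _ ha hb =>
      have key : ⁅a*b, z⁆ = (a * ⁅b, z⁆ * a⁻¹) * ⁅a, z⁆ := by group
      rw [key]
      exact N.mul_mem (‹N.Normal›.conj_mem _ hb _) ha
  | inv a _ ha =>
      have key : ⁅a⁻¹, z⁆ = a⁻¹ * ⁅a, z⁆⁻¹ * (a⁻¹)⁻¹ := by group
      rw [key]
      exact ‹N.Normal›.conj_mem _ (N.inv_mem ha) _

theorem lcs_commutator_le :
    ∀ j i : ℕ, ⁅(⊤ : Subgroup G).lowerCentralSeries i, (⊤ : Subgroup G).lowerCentralSeries j⁆ ≤ (⊤ : Subgroup G).lowerCentralSeries (i + j + 1) := by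
  intro j
  induction j with
  | zero =>
      intro i
      rw [Subgroup.lowerCentralSeries_zero, show i + 0 + 1 = i + 1 by rfl, lcs_succ']
  | succ j ih =>
      intro i
      rw [commutator_comm, lcs_succ' j]
      apply three_subgroups (H₁ := (⊤ : Subgroup G).lowerCentralSeries j) (H₂ := ⊤) (H₃ := (⊤ : Subgroup G).lowerCentralSeries i)
      · rw [commutator_comm (⊤ : Subgroup G), ← lcs_succ' i]
        calc ⁅(⊤ : Subgroup G).lowerCentralSeries (i+1), (⊤ : Subgroup G).lowerCentralSeries j⁆
            ≤ (⊤ : Subgroup G).lowerCentralSeries (i + 1 + j + 1) := ih (i+1)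
          _ ≤ (⊤ : Subgroup G).lowerCentralSeries (i + (j+1) + 1) := by
              apply Subgroup.lowerCentralSeries_antitone; omega
      · calc ⁅⁅(⊤ : Subgroup G).lowerCentralSeries i, (⊤ : Subgroup G).lowerCentralSeries j⁆, (⊤ : Subgroup G)⁆
            ≤ ⁅(⊤ : Subgroup G).lowerCentralSeries (i + j + 1), (⊤ : Subgroup G)⁆ :=
              commutator_mono (ih i) le_rfl
          _ = (⊤ : Subgroup G).lowerCentralSeries (i + j + 2) := (lcs_succ' _).symm
          _ ≤ (⊤ : Subgroup G).lowerCentralSeries (i + (j+1) + 1) := by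
              apply Subgroup.lowerCentralSeries_antitone; omega

end ThreeSub

namespace HallM

variable {K : Type*} [Group K]

/-- forward difference of a group-valued sequence -/
def Dl (u : ℕ → K) : ℕ → K := fun n => u (n+1) * (u n)⁻¹

def iterD : ℕ → (ℕ → K) → (ℕ → K)
  | 0, u => u
  | (r+1), u => iterD r (Dl u)

@[simp] lemma iterD_zero (u : ℕ → K) : iterD 0 u = u := rfl
lemma iterD_succ (r : ℕ) (u : ℕ → K) : iterD (r+1) u = iterD r (Dl u) := rfl

lemma iterD_Dl_comm (r : ℕ) (u : ℕ → K) : iterD r (Dl u) = Dl (iterD r u) := by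
  induction r generalizing u with
  | zero => rfl
  | succ r ih => rw [iterD_succ, ih (Dl u), iterD_succ]

lemma Dl_shift (u : ℕ → K) : Dl (fun n => u (n+1)) = fun n => Dl u (n+1) := rfl

lemma iterD_shift (r : ℕ) (u : ℕ → K) :
    iterD r (fun n => u (n+1)) = fun n => iterD r u (n+1) := by
  induction r generalizing u with
  | zero => rfl
  | succ r ih => rw [iterD_succ, Dl_shift, ih (Dl u), iterD_succ]

lemma Dl_map {K' : Type*} [Group K'] (f : K →* K') (u : ℕ → K) :
    Dl (fun n => f (u n)) = fun n => f (Dl u n) := by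
  funext n; simp [Dl]

lemma iterD_map {K' : Type*} [Group K'] (f : K →* K') (r : ℕ) (u : ℕ → K) :
    iterD r (fun n => f (u n)) = fun n => f (iterD r u n) := by
  induction r generalizing u with
  | zero => rfl
  | succ r ih => rw [iterD_succ, Dl_map, ih (Dl u), iterD_succ]

variable (G : ℕ → Subgroup K)

/-- polynomial class: differences up to order `R` lie suitably deep. -/
def Pb (R a σ : ℕ) (u : ℕ → K) : Prop :=
  ∀ r, r ≤ R → ∀ n, iterD r u n ∈ G (a + (r - σ))

variable {G}

lemma Gle (hmono : ∀ i, G (i+1) ≤ G i) {i j : ℕ} (h : i ≤ j) : G j ≤ G i := by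
  induction j with
  | zero => simp_all
  | succ j ih =>
      rcases Nat.lt_or_ge i (j+1) with h' | h'
      · exact le_trans (hmono j) (ih (by omega))
      · have : i = j + 1 := by omega
        subst this; exact le_rfl

lemma Pb_mono (hmono : ∀ i, G (i+1) ≤ G i) {R a σ a' σ' : ℕ} {u : ℕ → K}
    (h : ∀ r, a' + (r - σ') ≤ a + (r - σ)) (hu : Pb G R a σ u) : Pb G R a' σ' u :=
  fun r hr n => Gle hmono (h r) (hu r hr n)

lemma Pb_restrict {R R' a σ : ℕ} {u : ℕ → K} (h : R' ≤ R) (hu : Pb G R a σ u) :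
    Pb G R' a σ u := fun r hr n => hu r (le_trans hr h) n

lemma Pb_values {R a σ : ℕ} {u : ℕ → K} (hu : Pb G R a σ u) : ∀ n, u n ∈ G a := by
  intro n
  have := hu 0 (Nat.zero_le _) n
  simpa using this

lemma Pb_shift {R a σ : ℕ} {u : ℕ → K} (hu : Pb G R a σ u) :
    Pb G R a σ (fun n => u (n+1)) := by
  intro r hr n
  rw [iterD_shift]
  exact hu r hr (n+1)

lemma Pb_of {R a σ : ℕ} {u : ℕ → K} (hval : ∀ n, u n ∈ G a)
    (hd : Pb G R (a + (1-σ)) (σ-1) (Dl u)) : Pb G (R+1) a σ u := by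
  intro r hr n
  cases r with
  | zero => simpa using hval n
  | succ r' =>
      have h := hd r' (by omega) n
      rw [iterD_succ]
      have e : (a + (1-σ)) + (r' - (σ-1)) = a + (r' + 1 - σ) := by omega
      rw [e] at h
      exact h

lemma Pb_Dl {R a σ : ℕ} {u : ℕ → K} (hu : Pb G (R+1) a σ u) :
    Pb G R (a + (1-σ)) (σ-1) (Dl u) := by
  intro r hr n
  have h := hu (r+1) (by omega) n
  rw [iterD_succ] at h
  have e : (a + (1-σ)) + (r - (σ-1)) = a + (r + 1 - σ) := by omega
  rw [e]
  exact h

/- pointwise algebraic identities for differences -/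

lemma idmul (u v : ℕ → K) :
    Dl (fun n => u n * v n) =
      fun n => (u (n+1) * Dl v n * (u (n+1))⁻¹) * Dl u n := by
  funext n; simp only [Dl, mul_inv_rev]; group

lemma idinv (u : ℕ → K) :
    Dl (fun n => (u n)⁻¹) =
      fun n => (u (n+1))⁻¹ * (Dl u n)⁻¹ * u (n+1) := by
  funext n; simp only [Dl, mul_inv_rev, inv_inv]; group

lemma idconj (g w : ℕ → K) :
    Dl (fun n => g n * w n * (g n)⁻¹) =
      fun n => (g (n+1) * Dl w n * (g (n+1))⁻¹) * ⁅Dl g n, g n * w n * (g n)⁻¹⁆ := by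
  funext n
  simp only [Dl, commutatorElement_def, mul_inv_rev, inv_inv]
  group

lemma elem_comm (u v U V : K) :
    ⁅U*u, V*v⁆ * ⁅u,v⁆⁻¹ =
      (((( (U*⁅u,V⁆*U⁻¹) * (U*⁅V,⁅u,v⁆⁆*U⁻¹)) * ⁅U,⁅u,v⁆⁆) * (⁅u,v⁆*⁅U,V⁆*⁅u,v⁆⁻¹))
        * (⁅u,v⁆*(V*⁅U,v⁆*V⁻¹)*⁅u,v⁆⁻¹)) := by
  simp only [commutatorElement_def, mul_inv_rev, inv_inv]
  group

lemma Dl_mul_self (u : ℕ → K) (n : ℕ) : u (n+1) = Dl u n * u n := by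
  simp [Dl]

lemma idcomm (u v : ℕ → K) :
    Dl (fun n => ⁅u n, v n⁆) =
      fun n => (((( (Dl u n * ⁅u n, Dl v n⁆ * (Dl u n)⁻¹)
        * (Dl u n * ⁅Dl v n, ⁅u n, v n⁆⁆ * (Dl u n)⁻¹))
        * ⁅Dl u n, ⁅u n, v n⁆⁆)
        * (⁅u n, v n⁆ * ⁅Dl u n, Dl v n⁆ * ⁅u n, v n⁆⁻¹))
        * (⁅u n, v n⁆ * (Dl v n * ⁅Dl u n, v n⁆ * (Dl v n)⁻¹) * ⁅u n, v n⁆⁻¹)) := by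
  funext n
  show ⁅u (n+1), v (n+1)⁆ * (⁅u n, v n⁆)⁻¹ = _
  rw [Dl_mul_self u n, Dl_mul_self v n]
  exact elem_comm (u n) (v n) (Dl u n) (Dl v n)



theorem bundle (hmono : ∀ i, G (i+1) ≤ G i)
    (hcomm : ∀ i j, 1 ≤ i → 1 ≤ j → ⁅G i, G j⁆ ≤ G (i+j)) :
    ∀ R : ℕ,
    (∀ a σ (u v : ℕ → K), 1 ≤ a → σ ≤ a → Pb G R a σ u → Pb G R a σ v →
        Pb G R a σ (fun n => u n * v n)) ∧
    (∀ a σ (u : ℕ → K), 1 ≤ a → σ ≤ a → Pb G R a σ u →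
        Pb G R a σ (fun n => (u n)⁻¹)) ∧
    (∀ a σ b τ (g w : ℕ → K), 1 ≤ a → σ ≤ a → 1 ≤ b → τ ≤ b → Pb G R a σ g → Pb G R b τ w →
        Pb G R b τ (fun n => g n * w n * (g n)⁻¹)) ∧
    (∀ a σ b τ (g w : ℕ → K), 1 ≤ a → σ ≤ a → 1 ≤ b → τ ≤ b → Pb G R a σ g → Pb G R b τ w →
        Pb G R b τ (fun n => (g n)⁻¹ * w n * g n)) ∧
    (∀ a σ b τ (u v : ℕ → K), 1 ≤ a → σ ≤ a → 1 ≤ b → τ ≤ b → Pb G R a σ u → Pb G R b τ v →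
        Pb G R (a+b) (σ+τ) (fun n => ⁅u n, v n⁆)) := by
  -- values-level membership helpers
  have vconj : ∀ {a b : ℕ} {x w : K}, 1 ≤ a → 1 ≤ b → x ∈ G a → w ∈ G b →
      x * w * x⁻¹ ∈ G b := by
    intro a b x w ha hb hx hw
    have h : x * w * x⁻¹ = ⁅x, w⁆ * w := by group
    rw [h]
    exact mul_mem (Gle hmono (by omega) (hcomm a b ha hb (commutator_mem_commutator hx hw))) hw
  have vconj' : ∀ {a b : ℕ} {x w : K}, 1 ≤ a → 1 ≤ b → x ∈ G a → w ∈ G b →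
      x⁻¹ * w * x ∈ G b := by
    intro a b x w ha hb hx hw
    have h : x⁻¹ * w * x = x⁻¹ * w * (x⁻¹)⁻¹ := by rw [inv_inv]
    rw [h]
    exact vconj ha hb (inv_mem hx) hw
  have vcomm : ∀ {a b : ℕ} {x w : K}, 1 ≤ a → 1 ≤ b → x ∈ G a → w ∈ G b →
      ⁅x, w⁆ ∈ G (a+b) := fun ha hb hx hw =>
    hcomm _ _ ha hb (commutator_mem_commutator hx hw)
  intro R
  induction R with
  | zero =>
      have pb0 : ∀ {a σ : ℕ} (w : ℕ → K), (∀ n, w n ∈ G a) → Pb G 0 a σ w := by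
        intro a σ w hw r hr n
        have : r = 0 := by omega
        subst this
        simpa using hw n
      refine ⟨?_, ?_, ?_, ?_, ?_⟩
      · intro a σ u v _ _ hu hv
        exact pb0 _ fun n => mul_mem (Pb_values hu n) (Pb_values hv n)
      · intro a σ u _ _ hu
        exact pb0 _ fun n => inv_mem (Pb_values hu n)
      · intro a σ b τ g w ha _ hb _ hg hw
        exact pb0 _ fun n => vconj ha hb (Pb_values hg n) (Pb_values hw n)
      · intro a σ b τ g w ha _ hb _ hg hw
        exact pb0 _ fun n => vconj' ha hb (Pb_values hg n) (Pb_values hw n)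
      · intro a σ b τ u v ha _ hb _ hu hv
        exact pb0 _ fun n => vcomm ha hb (Pb_values hu n) (Pb_values hv n)
  | succ R IH =>
      obtain ⟨ihmul, ihinv, ihconj, ihconj', ihcomm⟩ := IH
      -- mul
      have mulS : ∀ a σ (u v : ℕ → K), 1 ≤ a → σ ≤ a → Pb G (R+1) a σ u → Pb G (R+1) a σ v →
          Pb G (R+1) a σ (fun n => u n * v n) := by
        intro a σ u v ha hσ hu hv
        apply Pb_of (fun n => mul_mem (Pb_values hu n) (Pb_values hv n))
        rw [idmul]
        exact ihmul _ _ _ _ (by omega) (by omega)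
          (ihconj a σ _ _ (fun n => u (n+1)) (Dl v) ha hσ (by omega) (by omega)
            (Pb_shift (Pb_restrict (by omega) hu)) (Pb_Dl hv))
          (Pb_Dl hu)
      -- inv
      have invS : ∀ a σ (u : ℕ → K), 1 ≤ a → σ ≤ a → Pb G (R+1) a σ u →
          Pb G (R+1) a σ (fun n => (u n)⁻¹) := by
        intro a σ u ha hσ hu
        apply Pb_of (fun n => inv_mem (Pb_values hu n))
        rw [idinv]
        exact ihconj' a σ _ _ (fun n => u (n+1)) (fun n => (Dl u n)⁻¹) ha hσ (by omega) (by omega)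
          (Pb_shift (Pb_restrict (by omega) hu))
          (ihinv _ _ (Dl u) (by omega) (by omega) (Pb_Dl hu))
      -- conj
      have conjS : ∀ a σ b τ (g w : ℕ → K), 1 ≤ a → σ ≤ a → 1 ≤ b → τ ≤ b →
          Pb G (R+1) a σ g → Pb G (R+1) b τ w →
          Pb G (R+1) b τ (fun n => g n * w n * (g n)⁻¹) := by
        intro a σ b τ g w ha hσ hb hτ hg hw
        apply Pb_of (fun n => vconj ha hb (Pb_values hg n) (Pb_values hw n))
        rw [idconj]
        refine ihmul _ _ _ _ (by omega) (by omega) ?_ ?_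
        · exact ihconj a σ _ _ (fun n => g (n+1)) (Dl w) ha hσ (by omega) (by omega)
            (Pb_shift (Pb_restrict (by omega) hg)) (Pb_Dl hw)
        · -- ⁅Dl g, g * w * g⁻¹⁆
          have hcw : Pb G R b τ (fun n => g n * w n * (g n)⁻¹) :=
            ihconj a σ b τ g w ha hσ hb hτ (Pb_restrict (by omega) hg)
              (Pb_restrict (by omega) hw)
          have hc : Pb G R ((a + (1-σ)) + b) ((σ-1) + τ)
              (fun n => ⁅Dl g n, g n * w n * (g n)⁻¹⁆) :=
            ihcomm _ _ b τ (Dl g) _ (by omega) (by omega) hb hτ (Pb_Dl hg) hcw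
          exact Pb_mono hmono (fun r => by omega) hc
      -- conj'
      have conjS' : ∀ a σ b τ (g w : ℕ → K), 1 ≤ a → σ ≤ a → 1 ≤ b → τ ≤ b →
          Pb G (R+1) a σ g → Pb G (R+1) b τ w →
          Pb G (R+1) b τ (fun n => (g n)⁻¹ * w n * g n) := by
        intro a σ b τ g w ha hσ hb hτ hg hw
        have e : (fun n => (g n)⁻¹ * w n * g n)
            = fun n => (g n)⁻¹ * w n * ((g n)⁻¹)⁻¹ := by
          funext n; rw [inv_inv]
        rw [e]
        apply Pb_of (fun n => vconj ha hb (inv_mem (Pb_values hg n)) (Pb_values hw n))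
        rw [idconj]
        refine ihmul _ _ _ _ (by omega) (by omega) ?_ ?_
        · -- (g(n+1))⁻¹ * Dl w n * ((g(n+1))⁻¹)⁻¹
          have h1 : Pb G R _ _ (fun n => (g (n+1))⁻¹ * Dl w n * g (n+1)) :=
            ihconj' a σ _ _ (fun n => g (n+1)) (Dl w) ha hσ (by omega) (by omega)
              (Pb_shift (Pb_restrict (by omega) hg)) (Pb_Dl hw)
          have e2 : (fun n => (g (n+1))⁻¹ * Dl w n * g (n+1))
              = fun n => ((fun m => (g m)⁻¹) (n+1) * Dl w n * (((fun m => (g m)⁻¹) (n+1)))⁻¹) := by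
            funext n; rw [inv_inv]
          rw [e2] at h1
          exact h1
        · have hDg : Pb G R (a + (1-σ)) (σ-1) (Dl (fun n => (g n)⁻¹)) := by
            rw [idinv]
            have := ihconj' a σ _ _ (fun n => g (n+1)) (fun n => (Dl g n)⁻¹) ha hσ
              (by omega) (by omega) (Pb_shift (Pb_restrict (by omega) hg))
              (ihinv _ _ (Dl g) (by omega) (by omega) (Pb_Dl hg))
            exact this
          have hcw : Pb G R b τ (fun n => (g n)⁻¹ * w n * ((g n)⁻¹)⁻¹) := by
            have := ihconj' a σ b τ g w ha hσ hb hτ (Pb_restrict (by omega) hg)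
              (Pb_restrict (by omega) hw)
            have e3 : (fun n => (g n)⁻¹ * w n * g n)
                = fun n => (g n)⁻¹ * w n * ((g n)⁻¹)⁻¹ := by
              funext n; rw [inv_inv]
            rwa [e3] at this
          have hc := ihcomm _ _ b τ (Dl (fun n => (g n)⁻¹)) _ (by omega) (by omega) hb hτ
            hDg hcw
          exact Pb_mono hmono (fun r => by omega) hc
      -- comm
      have commS : ∀ a σ b τ (u v : ℕ → K), 1 ≤ a → σ ≤ a → 1 ≤ b → τ ≤ b →
          Pb G (R+1) a σ u → Pb G (R+1) b τ v →
          Pb G (R+1) (a+b) (σ+τ) (fun n => ⁅u n, v n⁆) := by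
        intro a σ b τ u v ha hσ hb hτ hu hv
        apply Pb_of (fun n => vcomm ha hb (Pb_values hu n) (Pb_values hv n))
        rw [idcomm]
        have hu' := Pb_restrict (le_of_lt (Nat.lt_succ_self R)) hu
        have hv' := Pb_restrict (le_of_lt (Nat.lt_succ_self R)) hv
        have hU := Pb_Dl hu
        have hV := Pb_Dl hv
        have hW : Pb G R (a+b) (σ+τ) (fun n => ⁅u n, v n⁆) :=
          ihcomm a σ b τ u v ha hσ hb hτ hu' hv'
        -- target class
        set A' := (a+b) + (1 - (σ+τ)) with hA'
        set S' := (σ+τ) - 1 with hS'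
        have hA'1 : 1 ≤ A' := by omega
        have hS'A : S' ≤ A' := by omega
        -- F1
        have hF1 : Pb G R A' S' (fun n => Dl u n * ⁅u n, Dl v n⁆ * (Dl u n)⁻¹) := by
          have hin : Pb G R (a + (b + (1-τ))) (σ + (τ-1)) (fun n => ⁅u n, Dl v n⁆) :=
            ihcomm a σ _ _ u (Dl v) ha hσ (by omega) (by omega) hu' hV
          have hin' : Pb G R A' S' _ := Pb_mono hmono (fun r => by omega) hin
          exact ihconj _ _ A' S' (Dl u) _ (by omega) (by omega) hA'1 hS'A hU hin'
        -- F2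
        have hF2 : Pb G R A' S' (fun n => Dl u n * ⁅Dl v n, ⁅u n, v n⁆⁆ * (Dl u n)⁻¹) := by
          have hin : Pb G R ((b + (1-τ)) + (a+b)) ((τ-1) + (σ+τ))
              (fun n => ⁅Dl v n, ⁅u n, v n⁆⁆) :=
            ihcomm _ _ _ _ (Dl v) _ (by omega) (by omega) (by omega) (by omega) hV hW
          have hin' : Pb G R A' S' _ := Pb_mono hmono (fun r => by omega) hin
          exact ihconj _ _ A' S' (Dl u) _ (by omega) (by omega) hA'1 hS'A hU hin'
        -- F3
        have hF3 : Pb G R A' S' (fun n => ⁅Dl u n, ⁅u n, v n⁆⁆) := by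
          have hin : Pb G R ((a + (1-σ)) + (a+b)) ((σ-1) + (σ+τ)) _ :=
            ihcomm _ _ _ _ (Dl u) _ (by omega) (by omega) (by omega) (by omega) hU hW
          exact Pb_mono hmono (fun r => by omega) hin
        -- F4
        have hF4 : Pb G R A' S' (fun n => ⁅u n, v n⁆ * ⁅Dl u n, Dl v n⁆ * ⁅u n, v n⁆⁻¹) := by
          have hin : Pb G R ((a + (1-σ)) + (b + (1-τ))) ((σ-1) + (τ-1))
              (fun n => ⁅Dl u n, Dl v n⁆) :=
            ihcomm _ _ _ _ (Dl u) (Dl v) (by omega) (by omega) (by omega) (by omega) hU hV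
          have hin' : Pb G R A' S' _ := Pb_mono hmono (fun r => by omega) hin
          exact ihconj _ _ A' S' _ _ (by omega) (by omega) hA'1 hS'A hW hin'
        -- F5
        have hF5 : Pb G R A' S'
            (fun n => ⁅u n, v n⁆ * (Dl v n * ⁅Dl u n, v n⁆ * (Dl v n)⁻¹) * ⁅u n, v n⁆⁻¹) := by
          have hin : Pb G R ((a + (1-σ)) + b) ((σ-1) + τ) (fun n => ⁅Dl u n, v n⁆) :=
            ihcomm _ _ _ _ (Dl u) v (by omega) (by omega) hb hτ hU hv'
          have hin' : Pb G R A' S' _ := Pb_mono hmono (fun r => by omega) hin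
          have hd : Pb G R A' S' (fun n => Dl v n * ⁅Dl u n, v n⁆ * (Dl v n)⁻¹) :=
            ihconj _ _ A' S' (Dl v) _ (by omega) (by omega) hA'1 hS'A hV hin'
          exact ihconj _ _ A' S' _ _ (by omega) (by omega) hA'1 hS'A hW hd
        have e : (a+b) + (1 - (σ+τ)) = A' := rfl
        have hmul12 := ihmul A' S' _ _ hA'1 hS'A hF1 hF2
        have hmul123 := ihmul A' S' _ _ hA'1 hS'A hmul12 hF3
        have hmul1234 := ihmul A' S' _ _ hA'1 hS'A hmul123 hF4
        exact ihmul A' S' _ _ hA'1 hS'A hmul1234 hF5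
      exact ⟨mulS, invS, conjS, conjS', commS⟩



/-- binomial sequence -/
def bin (b : K) (d : ℕ) : ℕ → K := fun n => b ^ (n.choose d)

lemma Dl_one_seq : Dl (fun _ => (1:K)) = fun _ => (1:K) := by
  funext n; simp [Dl]

lemma iterD_one_seq (r : ℕ) : iterD r (fun _ => (1:K)) = fun _ => (1:K) := by
  induction r with
  | zero => rfl
  | succ r ih => rw [iterD_succ, Dl_one_seq, ih]

lemma Dl_const (c : K) : Dl (fun _ => c) = fun _ => (1:K) := by
  funext n; simp [Dl]

lemma Pb_const (hG1 : G 1 = ⊤) (c : K) (R σ : ℕ) : Pb G R 1 σ (fun _ => c) := by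
  intro r hr n
  cases r with
  | zero => simp [hG1]
  | succ r =>
      rw [iterD_succ, Dl_const, iterD_one_seq]
      exact one_mem _

lemma iterD_succ_out (r : ℕ) (u : ℕ → K) : iterD (r+1) u = Dl (iterD r u) := by
  rw [iterD_succ, iterD_Dl_comm]

lemma Dl_bin (b : K) (d : ℕ) : Dl (bin b (d+1)) = bin b d := by
  funext n
  show b ^ ((n+1).choose (d+1)) * (b ^ (n.choose (d+1)))⁻¹ = b ^ (n.choose d)
  rw [Nat.choose_succ_succ, pow_add, mul_inv_cancel_right]

lemma iterD_bin_le (b : K) : ∀ r d, r ≤ d → iterD r (bin b d) = bin b (d - r) := by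
  intro r
  induction r with
  | zero => intro d _; rfl
  | succ r ih =>
      intro d hrd
      obtain ⟨d', rfl⟩ : ∃ d', d = d' + 1 := ⟨d - 1, by omega⟩
      rw [iterD_succ, Dl_bin, ih d' (by omega),
        show d' + 1 - (r+1) = d' - r from by omega]

lemma iterD_bin_gt (b : K) {r d : ℕ} (h : d < r) : iterD r (bin b d) = fun _ => 1 := by
  obtain ⟨s, rfl⟩ : ∃ s, r = (d + 1) + s := ⟨r - d - 1, by omega⟩
  have h1 : iterD (d+1) (bin b d) = fun _ => (1:K) := by
    rw [iterD_succ_out, iterD_bin_le b d d le_rfl, show d - d = 0 from by omega]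
    funext n
    simp [Dl, bin]
  clear h
  induction s with
  | zero => simpa using h1
  | succ s ih =>
      have e : d + 1 + (s + 1) = (d + 1 + s) + 1 := by omega
      rw [e, iterD_succ_out, ih, Dl_one_seq]

lemma Pb_bin (b : K) {d : ℕ} (hb : b ∈ G d) (R : ℕ) : Pb G R d d (bin b d) := by
  intro r hr n
  rcases le_or_gt r d with h | h
  · rw [iterD_bin_le b r d h]
    have : d + (r - d) = d := by omega
    rw [this]
    exact pow_mem hb _
  · rw [iterD_bin_gt b h]
    exact one_mem _

lemma Pb_bin' (hmono : ∀ i, G (i+1) ≤ G i) (b : K) {d : ℕ} (hd : 1 ≤ d) (hb : b ∈ G d)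
    (R : ℕ) : Pb G R 1 1 (bin b d) :=
  Pb_mono hmono (fun r => by omega) (Pb_bin b hb R)

lemma hockey (i : ℕ) : ∀ n, (∑ m ∈ Finset.range n, m.choose i) = n.choose (i+1) := by
  intro n
  induction n with
  | zero => simp
  | succ n ih =>
      rw [Finset.sum_range_succ, ih, Nat.choose_succ_succ n i]
      simp only [Nat.succ_eq_add_one]
      omega

/-- interpolation for commutative-group-valued sequences -/
lemma abelian_taylor {M : Type*} [CommGroup M] :
    ∀ (D : ℕ) (w : ℕ → M), (∀ n, iterD (D+1) w n = 1) →
    ∀ n, w n = ∏ i ∈ Finset.range (D+1), (iterD i w 0) ^ (n.choose i) := by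
  intro D
  induction D with
  | zero =>
      intro w h n
      have hc : ∀ m, w m = w 0 := by
        intro m
        induction m with
        | zero => rfl
        | succ m ih =>
            have h1 : Dl w m = 1 := h m
            have : w (m+1) = Dl w m * w m := Dl_mul_self w m
            rw [this, h1, one_mul, ih]
      rw [hc n]
      simp
  | succ D ih =>
      intro w h n
      have hD : ∀ n, iterD (D+1) (Dl w) n = 1 := by
        intro n
        rw [← iterD_succ]
        exact h n
      have hdl := ih (Dl w) hD
      have hsum : ∀ m, w m = w 0 * ∏ j ∈ Finset.range m, Dl w j := by
        intro m
        induction m with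
        | zero => simp
        | succ m ihm =>
            rw [Finset.prod_range_succ, Dl_mul_self w m, ihm]
            rw [mul_comm (Dl w m) _]
            rw [mul_assoc]
      rw [hsum n]
      have : ∏ j ∈ Finset.range n, Dl w j
          = ∏ j ∈ Finset.range n, ∏ i ∈ Finset.range (D+1), (iterD i (Dl w) 0) ^ (j.choose i) := by
        apply Finset.prod_congr rfl
        intro j _
        exact hdl j
      rw [this, Finset.prod_comm]
      have : ∀ i ∈ Finset.range (D+1),
          (∏ j ∈ Finset.range n, (iterD i (Dl w) 0) ^ (j.choose i))
            = (iterD (i+1) w 0) ^ (n.choose (i+1)) := by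
        intro i _
        rw [Finset.prod_pow_eq_pow_sum, hockey, ← iterD_succ]
      rw [Finset.prod_congr rfl this]
      rw [Finset.prod_range_succ' (fun i => (iterD i w 0) ^ (n.choose i)) (D+1)]
      simp [mul_comm]



/-- ordered product `f 0 * f 1 * ⋯ * f (m-1)` in a (possibly noncommutative) group -/
def oprod (f : ℕ → K) : ℕ → K
  | 0 => 1
  | m+1 => oprod f m * f m

lemma oprod_succ (f : ℕ → K) (m : ℕ) : oprod f (m+1) = oprod f m * f m := rfl

lemma oprod_congr {f g : ℕ → K} {m : ℕ} (h : ∀ i, i < m → f i = g i) :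
    oprod f m = oprod g m := by
  induction m with
  | zero => rfl
  | succ m ih =>
      rw [oprod_succ, oprod_succ, ih (fun i hi => h i (by omega)), h m (by omega)]

lemma oprod_map {K' : Type*} [Group K'] (φ : K →* K') (f : ℕ → K) (m : ℕ) :
    φ (oprod f m) = oprod (fun i => φ (f i)) m := by
  induction m with
  | zero => simp [oprod]
  | succ m ih => rw [oprod_succ, map_mul, ih, oprod_succ]

lemma oprod_mem {H : Subgroup K} {f : ℕ → K} {m : ℕ} (h : ∀ i, i < m → f i ∈ H) :
    oprod f m ∈ H := by
  induction m with
  | zero => exact one_mem _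
  | succ m ih =>
      exact mul_mem (ih (fun i hi => h i (by omega))) (h m (by omega))

lemma comm_prod_oprod {M : Type*} [CommGroup M] (φ : M →* K) (g : ℕ → M) (m : ℕ) :
    φ (∏ i ∈ Finset.range m, g i) = oprod (fun i => φ (g i)) m := by
  induction m with
  | zero => simp [oprod]
  | succ m ih => rw [Finset.prod_range_succ, map_mul, ih, oprod_succ]

lemma Pb_oprod_bin (hmono : ∀ i, G (i+1) ≤ G i)
    (hcomm : ∀ i j, 1 ≤ i → 1 ≤ j → ⁅G i, G j⁆ ≤ G (i+j)) (hG1 : G 1 = ⊤)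
    (B : ℕ → K) (hB : ∀ i, 1 ≤ i → B i ∈ G i) :
    ∀ (m R : ℕ), Pb G R 1 1 (fun n => oprod (fun i => (B i)^(n.choose i)) m) := by
  intro m
  induction m with
  | zero =>
      intro R
      exact Pb_const hG1 1 R 1
  | succ m ih =>
      intro R
      have hbin : Pb G R 1 1 (bin (B m) m) := by
        rcases Nat.eq_zero_or_pos m with rfl | hm
        · have e2 : bin (B 0) 0 = fun _ => B 0 := by
            funext n; simp [bin]
          rw [e2]
          exact Pb_const hG1 (B 0) R 1
        · exact Pb_bin' hmono (B m) hm (hB m hm) R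
      exact (bundle hmono hcomm R).1 1 1 _ _ le_rfl le_rfl (ih R) hbin

universe u

theorem taylor (c : ℕ) : ∀ {K : Type u} [Group K] (G : ℕ → Subgroup K),
    (∀ i, G (i+1) ≤ G i) →
    (∀ i j, 1 ≤ i → 1 ≤ j → ⁅G i, G j⁆ ≤ G (i+j)) →
    (∀ i, (G i).Normal) →
    G 1 = ⊤ →
    G (c+1) = ⊥ →
    ∀ (u : ℕ → K), (∀ R, Pb G R 1 1 u) →
    ∃ B : ℕ → K, (∀ i, 1 ≤ i → B i ∈ G i) ∧
      ∀ n, u n = oprod (fun i => (B i) ^ (n.choose i)) (c+1) := by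
  induction c with
  | zero =>
      intro K _ G hmono hcomm hnorm hG1 hbot u hu
      refine ⟨fun _ => 1, fun i _ => one_mem _, fun n => ?_⟩
      have h1 : u n ∈ G 1 := Pb_values (hu 0) n
      rw [hbot] at h1
      have h2 : u n = 1 := Subgroup.mem_bot.mp h1
      rw [h2]
      simp [oprod]
  | succ c ih =>
      intro K _ G hmono hcomm hnorm hG1 hbot u hu
      set Z := G (c+1) with hZdef
      haveI : Z.Normal := hnorm (c+1)
      have hcent : ∀ z ∈ Z, ∀ g : K, Commute z g := by
        intro z hz g
        have hg1 : g ∈ G 1 := by rw [hG1]; trivial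
        have h := hcomm (c+1) 1 (by omega) le_rfl
          (Subgroup.commutator_mem_commutator hz hg1)
        rw [hbot] at h
        exact commutatorElement_eq_one_iff_commute.mp (Subgroup.mem_bot.mp h)
      set π := QuotientGroup.mk' Z with hπdef
      have hπsurj : Function.Surjective π := QuotientGroup.mk'_surjective Z
      set Gq : ℕ → Subgroup (K ⧸ Z) := fun i => (G i).map π with hGq
      have hmono' : ∀ i, Gq (i+1) ≤ Gq i := fun i => Subgroup.map_mono (hmono i)
      have hcomm' : ∀ i j, 1 ≤ i → 1 ≤ j → ⁅Gq i, Gq j⁆ ≤ Gq (i+j) := by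
        intro i j hi hj
        show ⁅(G i).map π, (G j).map π⁆ ≤ (G (i+j)).map π
        rw [← Subgroup.map_commutator]
        exact Subgroup.map_mono (hcomm i j hi hj)
      have hnorm' : ∀ i, (Gq i).Normal := fun i => (hnorm i).map π hπsurj
      have hG1' : Gq 1 = ⊤ := by
        show (G 1).map π = ⊤
        rw [hG1]
        exact Subgroup.map_top_of_surjective π hπsurj
      have hbot' : Gq (c+1) = ⊥ := by
        show (G (c+1)).map π = ⊥
        rw [Subgroup.map_eq_bot_iff, QuotientGroup.ker_mk']
      have hu' : ∀ R, Pb Gq R 1 1 (fun n => π (u n)) := by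
        intro R r hr n
        rw [iterD_map]
        exact Subgroup.mem_map_of_mem π (hu R r hr n)
      obtain ⟨Bq, hBqmem, hBqeq⟩ := ih Gq hmono' hcomm' hnorm' hG1' hbot' _ hu'
      have hlift : ∀ i, ∃ x : K, π x = Bq i ∧ (1 ≤ i → x ∈ G i) := by
        intro i
        rcases Nat.eq_zero_or_pos i with rfl | hi
        · obtain ⟨x, hx⟩ := hπsurj (Bq 0)
          exact ⟨x, hx, by omega⟩
        · obtain ⟨x, hxG, hx⟩ := Subgroup.mem_map.mp (hBqmem i hi)
          exact ⟨x, hx, fun _ => hxG⟩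
      choose Bl hBl1 hBl2 using hlift
      set v : ℕ → K := fun n => oprod (fun i => (Bl i)^(n.choose i)) (c+1) with hvdef
      set w : ℕ → K := fun n => (v n)⁻¹ * u n with hwdef
      have hvw : ∀ n, u n = v n * w n := by
        intro n; rw [hwdef]; simp
      have hπv : ∀ n, π (v n) = oprod (fun i => (Bq i)^(n.choose i)) (c+1) := by
        intro n
        rw [hvdef]
        simp only
        rw [oprod_map]
        exact oprod_congr fun i _ => by rw [map_pow, hBl1]
      have hwZ : ∀ n, w n ∈ Z := by
        intro n
        have h1 : π (w n) = 1 := by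
          rw [hwdef]
          simp only [map_mul, map_inv]
          rw [hπv n, hBqeq n]
          simp
        have hker : w n ∈ π.ker := h1
        rwa [hπdef, QuotientGroup.ker_mk'] at hker
      have hvPb : ∀ R, Pb G R 1 1 v :=
        fun R => Pb_oprod_bin hmono hcomm hG1 Bl hBl2 (c+1) R
      have hwPb : ∀ R, Pb G R 1 1 w := by
        intro R
        exact (bundle hmono hcomm R).1 1 1 _ _ le_rfl le_rfl
          ((bundle hmono hcomm R).2.1 1 1 _ le_rfl le_rfl (hvPb R)) (hu R)
      have hvan : ∀ n, iterD (c+2) w n = 1 := by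
        intro n
        have h := hwPb (c+2) (c+2) le_rfl n
        have e : 1 + (c+2 - 1) = (c+1)+1 := by omega
        rw [e, hbot] at h
        exact Subgroup.mem_bot.mp h
      letI : CommGroup ↥Z :=
        { (inferInstance : Group ↥Z) with
          mul_comm := fun a b => Subtype.ext ((hcent a a.2 b).eq) }
      set w' : ℕ → ↥Z := fun n => ⟨w n, hwZ n⟩ with hw'def
      have hcoe : ∀ r n, ((iterD r w' n : ↥Z) : K) = iterD r w n := by
        intro r n
        have h2 := iterD_map (Z.subtype) r w'
        have e : (fun n => Z.subtype (w' n)) = w := by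
          funext m; rfl
        rw [e] at h2
        rw [h2]
        rfl
      have hvan' : ∀ n, iterD ((c+1)+1) w' n = 1 := by
        intro n
        apply Subtype.ext
        rw [hcoe]
        exact hvan n
      have hform' := abelian_taylor (c+1) w' hvan'
      set zc : ℕ → K := fun i => iterD i w 0 with hzcdef
      have hwform : ∀ n, w n = oprod (fun i => (zc i)^(n.choose i)) (c+2) := by
        intro n
        have h3 := congrArg (Z.subtype) (hform' n)
        have hL : Z.subtype (w' n) = w n := rfl
        rw [hL, comm_prod_oprod] at h3
        rw [h3]
        apply oprod_congr
        intro i _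
        show Z.subtype _ = _
        rw [map_pow]
        congr 1
        exact hcoe i 0
      have hzZ : ∀ i, zc i ∈ Z := by
        intro i
        rw [hzcdef]
        simp only
        rw [← hcoe i 0]
        exact (iterD i w' 0).2
      have hzG : ∀ i, 1 ≤ i → zc i ∈ G i := by
        intro i hi
        have h := hwPb i i le_rfl 0
        have e : 1 + (i - 1) = i := by omega
        rwa [e] at h
      set pad : ℕ → K := fun i => if i ≤ c then Bl i else 1 with hpaddef
      have hvpad : ∀ n, v n = oprod (fun i => (pad i)^(n.choose i)) (c+2) := by
        intro n
        rw [oprod_succ]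
        have e1 : pad (c+1) = 1 := by rw [hpaddef]; simp
        rw [e1, one_pow, mul_one, hvdef]
        apply oprod_congr
        intro i hi
        rw [hpaddef]
        simp only
        rw [if_pos (by omega)]
      refine ⟨fun i => pad i * zc i, ?_, ?_⟩
      · intro i hi
        apply mul_mem _ (hzG i hi)
        rw [hpaddef]
        simp only
        split
        · exact hBl2 i hi
        · exact one_mem _
      · intro n
        rw [hvw n, hvpad n, hwform n]
        have hmerge : ∀ m, (oprod (fun i => (pad i)^(n.choose i)) m)
            * (oprod (fun i => (zc i)^(n.choose i)) m)
            = oprod (fun i => (pad i * zc i)^(n.choose i)) m := by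
          intro m
          induction m with
          | zero => simp [oprod]
          | succ m ihm =>
              rw [oprod_succ, oprod_succ, oprod_succ]
              have hc1 : Commute (pad m) (zc m) := ((hcent _ (hzZ m) _).symm)
              have hc2 : ∀ x : K, Commute ((zc m)^(n.choose m)) x := by
                intro x
                exact ((hcent _ (hzZ m) x).pow_left _)
              calc (oprod (fun i => (pad i)^(n.choose i)) m) * (pad m)^(n.choose m)
                  * ((oprod (fun i => (zc i)^(n.choose i)) m) * (zc m)^(n.choose m))
                  = ((oprod (fun i => (pad i)^(n.choose i)) m)
                    * (oprod (fun i => (zc i)^(n.choose i)) m))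
                    * ((pad m)^(n.choose m) * (zc m)^(n.choose m)) := by
                    have hcen : oprod (fun i => (zc i)^(n.choose i)) m ∈ Subgroup.center K := by
                      apply oprod_mem
                      intro i _
                      apply pow_mem
                      rw [Subgroup.mem_center_iff]
                      intro x
                      exact ((hcent _ (hzZ i) x)).symm.eq
                    rw [mul_assoc, mul_assoc]
                    congr 1
                    rw [← mul_assoc, ← mul_assoc]
                    congr 1
                    exact Subgroup.mem_center_iff.mp hcen ((pad m)^(n.choose m))
                _ = (oprod (fun i => (pad i * zc i)^(n.choose i)) m)
                    * ((pad m) * (zc m))^(n.choose m) := by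
                    rw [ihm, (hc1.mul_pow _)]
        exact hmerge (c+2)



lemma oprod_choose_zero (B : ℕ → K) : ∀ m, oprod (fun i => B i ^ (Nat.choose 0 i)) (m+1) = B 0 := by
  intro m
  induction m with
  | zero => simp [oprod]
  | succ m ih =>
      rw [oprod_succ, ih, Nat.choose_eq_zero_of_lt (by omega), pow_zero, mul_one]

lemma oprod_choose_one (B : ℕ → K) : ∀ m, oprod (fun i => B i ^ (Nat.choose 1 i)) (m+2) = B 0 * B 1 := by
  intro m
  induction m with
  | zero => simp [oprod]
  | succ m ih =>
      rw [oprod_succ, ih, Nat.choose_eq_zero_of_lt (by omega), pow_zero, mul_one]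

lemma oprod_eq_one {f : ℕ → K} {m : ℕ} (h : ∀ i, i < m → f i = 1) : oprod f m = 1 := by
  induction m with
  | zero => rfl
  | succ m ih =>
      rw [oprod_succ, ih (fun i hi => h i (by omega)), h m (by omega), mul_one]

lemma Pb_pow_seq (hG1 : G 1 = ⊤) (g : K) (R : ℕ) : Pb G R 1 1 (fun n => g ^ n) := by
  have hDl : Dl (fun n => g ^ n) = fun _ => g := by
    funext n
    show g ^ (n+1) * (g ^ n)⁻¹ = g
    rw [pow_succ']
    simp
  intro r hr n
  match r with
  | 0 =>
      show g ^ n ∈ G (1 + (0 - 1))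
      simp only [Nat.zero_sub, Nat.add_zero]
      rw [hG1]; trivial
  | 1 =>
      rw [iterD_succ, hDl]
      show g ∈ G (1 + (1 - 1))
      simp only [Nat.sub_self, Nat.add_zero]
      rw [hG1]; trivial
  | (r+2) =>
      rw [iterD_succ, hDl, iterD_succ, Dl_const, iterD_one_seq]
      exact one_mem _

theorem main_lemma {K : Type*} [Group K] (p : ℕ) (hp : p.Prime) (c : ℕ) (hcp : c < p)
    (hnil : (⊤ : Subgroup K).lowerCentralSeries c = ⊥)
    (hexp : ∀ g ∈ (⊤ : Subgroup K).lowerCentralSeries 1, g ^ p = 1) :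
    ∀ x y : K, x ^ p = 1 → y ^ p = 1 → (x*y)^p = 1 := by
  rcases Nat.eq_zero_or_pos c with rfl | hc
  · intro x y _ _
    have h : (x*y)^p ∈ (⊤ : Subgroup K).lowerCentralSeries 0 := by
      rw [Subgroup.lowerCentralSeries_zero]; trivial
    rw [hnil] at h
    exact Subgroup.mem_bot.mp h
  · intro x y hx hy
    set Gf : ℕ → Subgroup K := fun j => (⊤ : Subgroup K).lowerCentralSeries (j-1) with hGf
    have hG1 : Gf 1 = ⊤ := by
      show (⊤ : Subgroup K).lowerCentralSeries 0 = ⊤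
      exact Subgroup.lowerCentralSeries_zero ⊤
    have hmonoG : ∀ i, Gf (i+1) ≤ Gf i := fun i =>
      Subgroup.lowerCentralSeries_antitone ⊤ (by omega)
    have hcommG : ∀ i j, 1 ≤ i → 1 ≤ j → ⁅Gf i, Gf j⁆ ≤ Gf (i+j) := by
      intro i j hi hj
      have h := lcs_commutator_le (G := K) (j-1) (i-1)
      have e : (i-1) + (j-1) + 1 = i + j - 1 := by omega
      rw [e] at h
      exact h
    have hnormG : ∀ i, (Gf i).Normal := fun i => Subgroup.lowerCentralSeries_normal ⊤ _
    have hbotG : Gf (c+1) = ⊥ := by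
      show (⊤ : Subgroup K).lowerCentralSeries (c+1-1) = ⊥
      rw [show c+1-1 = c from by omega]
      exact hnil
    have heseq : ∀ R, Pb Gf R 1 1 (fun n => (y⁻¹)^n * (x⁻¹)^n * (x*y)^n) := by
      intro R
      exact (bundle hmonoG hcommG R).1 1 1 _ _ le_rfl le_rfl
        ((bundle hmonoG hcommG R).1 1 1 _ _ le_rfl le_rfl
          (Pb_pow_seq hG1 y⁻¹ R) (Pb_pow_seq hG1 x⁻¹ R))
        (Pb_pow_seq hG1 (x*y) R)
    obtain ⟨B, hBmem, hBeq⟩ := taylor c Gf hmonoG hcommG hnormG hG1 hbotG _ heseq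
    obtain ⟨c', rfl⟩ : ∃ c', c = c' + 1 := ⟨c - 1, by omega⟩
    have hB0 : B 0 = 1 := by
      have h := hBeq 0
      simp only [pow_zero, one_mul] at h
      rw [oprod_choose_zero] at h
      exact h.symm
    have hB1 : B 1 = 1 := by
      have h := hBeq 1
      simp only [pow_one] at h
      rw [oprod_choose_one] at h
      have hL : y⁻¹ * x⁻¹ * (x * y) = 1 := by group
      rw [hL, hB0, one_mul] at h
      exact h.symm
    have hfacs : ∀ i, i < c'+1+1 → B i ^ (Nat.choose p i) = 1 := by
      intro i hi
      match i with
      | 0 => rw [hB0, one_pow]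
      | 1 => rw [hB1, one_pow]
      | (j+2) =>
          have hmem : B (j+2) ∈ Gf (j+2) := hBmem _ (by omega)
          have hmem2 : B (j+2) ∈ (⊤ : Subgroup K).lowerCentralSeries 1 := by
            have : Gf (j+2) ≤ (⊤ : Subgroup K).lowerCentralSeries 1 := by
              show (⊤ : Subgroup K).lowerCentralSeries (j+2-1) ≤ (⊤ : Subgroup K).lowerCentralSeries 1
              exact Subgroup.lowerCentralSeries_antitone ⊤ (by omega)
            exact this hmem
          have hEp : B (j+2) ^ p = 1 := hexp _ hmem2
          have hdvd : p ∣ Nat.choose p (j+2) := hp.dvd_choose_self (by omega) (by omega)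
          obtain ⟨t, ht⟩ := hdvd
          rw [ht, pow_mul, hEp, one_pow]
    have hEone : oprod (fun i => B i ^ (Nat.choose p i)) (c'+1+1) = 1 := oprod_eq_one hfacs
    have h := hBeq p
    rw [hEone, inv_pow, inv_pow, hx, hy] at h
    simpa using h

theorem aux (p : ℕ) (hp : p.Prime) :
    ∀ k, k < p → ∀ {P : Type*} [Group P] (C : ℕ → Subgroup P),
    C 0 = ⊥ → C k = ⊤ → (∀ i, C i ≤ C (i+1)) →
    (∀ i, ⁅(⊤ : Subgroup P), C (i + 1)⁆ ≤ C i) →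
    (∀ i, C i = Subgroup.closure {x : P | x ∈ C i ∧ x ^ p = 1}) →
    ∀ x : P, x ^ p = 1 := by
  intro k
  induction k with
  | zero =>
      intro hk P _ C h0 htop hmono hcent hgen x
      have hx : x ∈ C 0 := by rw [htop]; trivial
      rw [h0] at hx
      rw [Subgroup.mem_bot.mp hx, one_pow]
  | succ k ih =>
      intro hk P instP C h0 htop hmono hcent hgen x
      have hchain : ∀ i j, i ≤ j → C i ≤ C j := by
        intro i j hij
        induction j with
        | zero => have : i = 0 := by omega
                  subst this; exact le_rfl
        | succ j ihj =>
            rcases Nat.lt_or_ge i (j+1) with h' | h'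
            · exact le_trans (ihj (by omega)) (hmono j)
            · have : i = j+1 := by omega
              subst this; exact le_rfl
      set N := C k with hNdef
      have hCle : ∀ i, i ≤ k → C i ≤ N := fun i hi => hchain i k hi
      -- the restricted series on N
      set D : ℕ → Subgroup ↥N := fun i => (C (min i k)).subgroupOf N with hDdef
      have hgenD : ∀ j, j ≤ k →
          (C j).subgroupOf N = Subgroup.closure {x : ↥N | x ∈ (C j).subgroupOf N ∧ x ^ p = 1} := by
        intro j hjk
        apply le_antisymm
        · intro g hg
          have hgC : (g : P) ∈ C j := Subgroup.mem_subgroupOf.mp hg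
          rw [hgen j] at hgC
          have hmapped : Subgroup.closure {x : P | x ∈ C j ∧ x ^ p = 1}
              ≤ (Subgroup.closure {x : ↥N | x ∈ (C j).subgroupOf N ∧ x ^ p = 1}).map N.subtype := by
            apply (Subgroup.closure_le _).mpr
            rintro z ⟨hz1, hz2⟩
            have hzN : z ∈ N := hCle j hjk hz1
            refine ⟨⟨z, hzN⟩, Subgroup.subset_closure ⟨Subgroup.mem_subgroupOf.mpr hz1, ?_⟩, rfl⟩
            apply Subtype.ext
            show ((⟨z, hzN⟩ : ↥N) ^ p : ↥N).val = (1 : P)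
            rw [SubmonoidClass.coe_pow]
            exact hz2
          obtain ⟨g', hg', hgg⟩ := hmapped hgC
          have : g' = g := Subtype.ext hgg
          rwa [← this]
        · apply (Subgroup.closure_le _).mpr
          rintro z ⟨hz1, _⟩
          exact hz1
      have hNexp : ∀ z : P, z ∈ N → z ^ p = 1 := by
        intro z hz
        have happ := ih (by omega) (P := ↥N) D ?_ ?_ ?_ ?_ ?_ ⟨z, hz⟩
        · have : ((⟨z, hz⟩ : ↥N) ^ p : ↥N).val = ((1 : ↥N) : P) := by rw [happ]
          rw [SubmonoidClass.coe_pow] at this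
          simpa using this
        · show (C (min 0 k)).subgroupOf N = ⊥
          rw [Nat.zero_min, h0, Subgroup.bot_subgroupOf]
        · show (C (min k k)).subgroupOf N = ⊤
          rw [min_self, ← hNdef]
          exact Subgroup.subgroupOf_self N
        · intro i
          show (C (min i k)).subgroupOf N ≤ (C (min (i+1) k)).subgroupOf N
          intro g hg
          exact Subgroup.mem_subgroupOf.mpr
            (hchain _ _ (by omega) (Subgroup.mem_subgroupOf.mp hg))
        · intro i
          rw [Subgroup.commutator_le]
          intro a _ b hb
          apply Subgroup.mem_subgroupOf.mpr
          have hcoe : ((⁅a, b⁆ : ↥N) : P) = ⁅(a : P), (b : P)⁆ :=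
            map_commutatorElement N.subtype a b
          rw [hcoe]
          rcases le_or_gt (i+1) k with hik | hik
          · have hb' : (b : P) ∈ C (i+1) := by
              have := Subgroup.mem_subgroupOf.mp hb
              rwa [show min (i+1) k = i+1 from by omega] at this
            have h2 : ⁅(a : P), (b : P)⁆ ∈ C i :=
              hcent i (Subgroup.commutator_mem_commutator (Subgroup.mem_top _) hb')
            rwa [show min i k = i from by omega]
          · rw [show min i k = k from by omega]
            rw [commutatorElement_def]
            exact mul_mem (mul_mem (mul_mem a.2 b.2) (inv_mem a.2)) (inv_mem b.2)
        · intro i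
          show (C (min i k)).subgroupOf N = _
          exact hgenD (min i k) (Nat.min_le_right i k)
      -- exponent facts and class bound for P
      have hγ : ∀ g ∈ (⊤ : Subgroup P).lowerCentralSeries 1, g ^ p = 1 := by
        intro g hg
        apply hNexp
        have h1 : (⊤ : Subgroup P).lowerCentralSeries 1 ≤ C k := by
          rw [lcs_succ' 0, Subgroup.lowerCentralSeries_zero]
          have h2 := hcent k
          rwa [htop] at h2
        exact h1 hg
      have hstep : ∀ j, j ≤ k+1 → (⊤ : Subgroup P).lowerCentralSeries j ≤ C (k+1-j) := by
        intro j
        induction j with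
        | zero =>
            intro _
            rw [Subgroup.lowerCentralSeries_zero, show k+1-0 = k+1 from rfl, htop]
        | succ j ihj =>
            intro hj
            rw [lcs_succ' j, Subgroup.commutator_comm]
            calc ⁅(⊤ : Subgroup P), (⊤ : Subgroup P).lowerCentralSeries j⁆
                ≤ ⁅(⊤ : Subgroup P), C (k+1-j)⁆ :=
                  Subgroup.commutator_mono le_rfl (ihj (by omega))
              _ = ⁅(⊤ : Subgroup P), C ((k-j)+1)⁆ := by
                  rw [show k+1-j = (k-j)+1 from by omega]
              _ ≤ C (k-j) := hcent (k-j)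
              _ = C (k+1-(j+1)) := by rw [show k-j = k+1-(j+1) from by omega]
      have hclass : (⊤ : Subgroup P).lowerCentralSeries (k+1) = ⊥ := by
        apply le_antisymm _ bot_le
        calc (⊤ : Subgroup P).lowerCentralSeries (k+1) ≤ C (k+1-(k+1)) := hstep (k+1) le_rfl
          _ = ⊥ := by rw [show k+1-(k+1) = 0 from by omega, h0]
      have hmul := main_lemma p hp (k+1) hk hclass hγ
      let Q : Subgroup P :=
        { carrier := {g : P | g ^ p = 1}
          one_mem' := one_pow p
          mul_mem' := @fun a b ha hb => hmul a b ha hb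
          inv_mem' := @fun a ha => by
            show a⁻¹ ^ p = 1
            rw [inv_pow, ha, inv_one] }
      have hQ : ⊤ ≤ Q := by
        rw [← htop, hgen (k+1)]
        apply (Subgroup.closure_le _).mpr
        rintro z ⟨_, hz2⟩
        exact hz2
      exact hQ (Subgroup.mem_top x)


end HallM

/-- Hall's corollary: a finite `p`-group with a central series of length `k < p`,
each term of which is generated by elements of order dividing `p`, has exponent `p`. -/
theorem stmt0 {P : Type*} [Group P] [Finite P] (p : ℕ) (hp : p.Prime)
    (hP : IsPGroup p P) (k : ℕ) (hk : k < p)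
    (C : ℕ → Subgroup P)
    (h0 : C 0 = ⊥) (htop : C k = ⊤)
    (hmono : ∀ i, C i ≤ C (i + 1))
    (hnorm : ∀ i, (C i).Normal)
    (hcentral : ∀ i, ⁅(⊤ : Subgroup P), C (i + 1)⁆ ≤ C i)
    (hgen : ∀ i, C i = Subgroup.closure {x : P | x ∈ C i ∧ x ^ p = 1}) :
    ∀ x : P, x ^ p = 1 := by
  intro x
  exact HallM.aux p hp k hk C h0 htop hmono hcentral hgen x
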